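/- For every integer n ≥ 1 and every real t, the n×n real symmetric matrix A_n(-1/2, t) with (i,j) entry min{i,j} − 1/2 + t·δ_{ij} (indices 1,…,n) is positive semidefinite if and only if t ≥ -1/(2 + 2·cos(π/(2n))). -/

import Mathlib

open Real

section Aux
open Finset Matrix

noncomputable def thet (n : ℕ) : ℝ := π / (2 * n)

lemma thet_pos {n : ℕ} (hn : 1 ≤ n) : 0 < thet n := by
  have : (0:ℝ) < n := by exact_mod_cast hn
  unfold thet; positivity

lemma cos_thet_pos {n : ℕ} (hn : 1 ≤ n) {k : ℕ} (hk : k < n) :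
    0 < Real.cos ((k : ℝ) * thet n) := by
  have hn0 : (0:ℝ) < n := by exact_mod_cast hn
  apply Real.cos_pos_of_mem_Ioo
  constructor
  · have : (0:ℝ) ≤ (k : ℝ) * thet n :=
      mul_nonneg (Nat.cast_nonneg k) (thet_pos hn).le
    linarith [Real.pi_pos]
  · have hkn : (k:ℝ) < n := by exact_mod_cast hk
    have : (k:ℝ) * thet n < n * thet n :=
      mul_lt_mul_of_pos_right hkn (thet_pos hn)
    have hnt : (n:ℝ) * thet n = π / 2 := by
      unfold thet; field_simp
    linarith

lemma cos_thet_ne {n : ℕ} (hn : 1 ≤ n) {k : ℕ} (hk : k < n) :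
    Real.cos ((k : ℝ) * thet n) ≠ 0 := (cos_thet_pos hn hk).ne'

lemma cos_n_thet {n : ℕ} (hn : 1 ≤ n) : Real.cos ((n : ℝ) * thet n) = 0 := by
  have hn0 : (n:ℝ) ≠ 0 := by
    have : (0:ℝ) < n := by exact_mod_cast hn
    exact this.ne'
  have : (n:ℝ) * thet n = π / 2 := by unfold thet; field_simp
  rw [this, Real.cos_pi_div_two]

lemma cos_rec (n m : ℕ) :
    Real.cos (((m:ℝ) + 2) * thet n)
      = 2 * Real.cos (thet n) * Real.cos (((m:ℝ) + 1) * thet n)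
        - Real.cos ((m:ℝ) * thet n) := by
  have h1 := Real.cos_add (((m:ℝ) + 1) * thet n) (thet n)
  have h2 := Real.cos_sub (((m:ℝ) + 1) * thet n) (thet n)
  have e1 : ((m:ℝ) + 1) * thet n + thet n = ((m:ℝ) + 2) * thet n := by ring
  have e2 : ((m:ℝ) + 1) * thet n - thet n = (m:ℝ) * thet n := by ring
  rw [e1] at h1; rw [e2] at h2
  linarith

lemma key_id {n : ℕ} (hn : 1 ≤ n) (Y : ℕ → ℝ) :
    ∀ m, m < n →
    Real.cos (thet n) * Y 0 ^ 2
      + 2 * Real.cos (thet n) * ∑ k ∈ Ico 1 (m + 1), Y k ^ 2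
      + 2 * ∑ k ∈ range m, Y k * Y (k + 1)
      - Real.cos (((m:ℝ) + 1) * thet n) / Real.cos ((m:ℝ) * thet n) * Y m ^ 2
    = ∑ j ∈ range m,
        (Real.cos (((j:ℝ) + 1) * thet n) * Y j + Real.cos ((j:ℝ) * thet n) * Y (j + 1)) ^ 2
          / (Real.cos ((j:ℝ) * thet n) * Real.cos (((j:ℝ) + 1) * thet n)) := by
  intro m
  induction m with
  | zero =>
    intro _
    simp [Real.cos_zero]
  | succ m ih =>
    intro hm1
    have hm : m < n := Nat.lt_of_succ_lt hm1
    have hcm := cos_thet_ne hn hm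
    have hcm1 : Real.cos (((m:ℝ) + 1) * thet n) ≠ 0 := by
      have := cos_thet_ne hn hm1
      push_cast at this
      exact this
    have hrec := cos_rec n m
    have IH := ih hm
    rw [sum_Ico_succ_top (by omega : 1 ≤ m + 1), sum_range_succ, sum_range_succ]
    rw [← IH]
    push_cast
    rw [show ((m:ℝ)+1+1) = (m:ℝ)+2 by ring, hrec]
    field_simp
    ring

lemma F_eq {n : ℕ} (hn : 1 ≤ n) (Y : ℕ → ℝ) (hYn : Y n = 0) :
    (2 + 2 * Real.cos (thet n)) * (∑ k ∈ range n, Y k ^ 2 - Y 0 ^ 2 / 2)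
      - ∑ k ∈ range n, (Y k - Y (k + 1)) ^ 2
    = ∑ j ∈ range (n - 1),
        (Real.cos (((j:ℝ) + 1) * thet n) * Y j + Real.cos ((j:ℝ) * thet n) * Y (j + 1)) ^ 2
          / (Real.cos ((j:ℝ) * thet n) * Real.cos (((j:ℝ) + 1) * thet n)) := by
  obtain ⟨m, rfl⟩ : ∃ m, n = m + 1 := ⟨n - 1, by omega⟩
  have hkey := key_id hn Y m (by omega)
  have hcn : Real.cos (((m:ℝ) + 1) * thet (m + 1)) = 0 := by
    have := cos_n_thet hn
    push_cast at this
    exact this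
  rw [hcn] at hkey
  simp only [Nat.add_sub_cancel]
  rw [← hkey]
  have h1 : ∑ k ∈ range (m + 1), Y k ^ 2 = Y 0 ^ 2 + ∑ k ∈ Ico 1 (m + 1), Y k ^ 2 := by
    rw [range_eq_Ico, sum_eq_sum_Ico_succ_bot (by omega : 0 < m + 1)]
  have h2 : ∑ k ∈ range (m + 1), (Y k - Y (k + 1)) ^ 2
      = ∑ k ∈ range (m + 1), Y k ^ 2 - 2 * ∑ k ∈ range (m + 1), Y k * Y (k + 1)
        + ∑ k ∈ range (m + 1), Y (k + 1) ^ 2 := by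
    have e : ∀ k, (Y k - Y (k + 1)) ^ 2
        = Y k ^ 2 - 2 * (Y k * Y (k + 1)) + Y (k + 1) ^ 2 := fun k => by ring
    simp_rw [e, sum_add_distrib, Finset.sum_sub_distrib, ← mul_sum]
  have h3 : ∑ k ∈ range (m + 1), Y (k + 1) ^ 2 = ∑ k ∈ Ico 1 (m + 1), Y k ^ 2 := by
    rw [sum_range_succ, hYn, sum_Ico_eq_sum_range]
    simp only [Nat.add_sub_cancel]
    rw [show (0:ℝ) ^ 2 = 0 by ring, add_zero]
    exact Finset.sum_congr rfl fun k _ => by rw [add_comm 1 k]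
  have h4 : ∑ k ∈ range (m + 1), Y k * Y (k + 1) = ∑ k ∈ range m, Y k * Y (k + 1) := by
    rw [sum_range_succ, hYn]
    ring
  rw [h2, h3, h4, h1]
  ring

end Aux

/-- The `n×n` matrix `Aₙ(s,t)` with `(i,j)` entry `min{i,j} + s + t·δᵢⱼ`
(indices `1,…,n`). -/
def A (n : ℕ) (s t : ℝ) : Matrix (Fin n) (Fin n) ℝ :=
  Matrix.of fun i j =>
    ((min (i.1 + 1) (j.1 + 1) : ℕ) : ℝ) + s + if i = j then t else 0

section Aux2
open Finset Matrix

lemma A_isHermitian (n : ℕ) (s t : ℝ) : (A n s t).IsHermitian := by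
  ext i j
  simp only [Matrix.conjTranspose_apply, A, Matrix.of_apply, star_trivial]
  rw [min_comm]
  congr 1
  simp [eq_comm]

noncomputable def Yx {n : ℕ} (x : Fin n → ℝ) (k : ℕ) : ℝ :=
  ∑ i ∈ univ.filter (fun i : Fin n => k ≤ i.1), x i

lemma Yx_sub {n : ℕ} (x : Fin n → ℝ) {k : ℕ} (hk : k < n) :
    Yx x k - Yx x (k + 1) = x ⟨k, hk⟩ := by
  have hins : univ.filter (fun i : Fin n => k ≤ i.1)
      = insert ⟨k, hk⟩ (univ.filter (fun i : Fin n => k + 1 ≤ i.1)) := by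
    ext i
    simp only [mem_filter, mem_univ, true_and, mem_insert, Fin.ext_iff]
    omega
  have hnotmem : (⟨k, hk⟩ : Fin n) ∉ univ.filter (fun i : Fin n => k + 1 ≤ i.1) := by
    simp
  unfold Yx
  rw [hins, sum_insert hnotmem]
  ring

lemma Yx_ge {n : ℕ} (x : Fin n → ℝ) {k : ℕ} (hk : n ≤ k) : Yx x k = 0 := by
  unfold Yx
  rw [Finset.sum_eq_zero]
  intro i hi
  simp only [mem_filter] at hi
  omega

lemma sum_sq_eq {n : ℕ} (x : Fin n → ℝ) :
    ∑ i, (x i) ^ 2 = ∑ k ∈ range n, (Yx x k - Yx x (k + 1)) ^ 2 := by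
  rw [← Fin.sum_univ_eq_sum_range (fun k => (Yx x k - Yx x (k + 1)) ^ 2) n]
  refine Finset.sum_congr rfl fun i _ => ?_
  rw [Yx_sub x i.2]

lemma quad_form (n : ℕ) (s t : ℝ) (x : Fin n → ℝ) :
    x ⬝ᵥ (A n s t) *ᵥ x
      = ∑ k ∈ range n, (Yx x k) ^ 2 + s * (Yx x 0) ^ 2 + t * ∑ i, (x i) ^ 2 := by
  have hmin : ∑ k ∈ range n, (Yx x k) ^ 2
      = ∑ i, ∑ j, ((min (i.1 + 1) (j.1 + 1) : ℕ) : ℝ) * (x i * x j) := by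
    have hY : ∀ k, Yx x k = ∑ i, if k ≤ i.1 then x i else 0 := by
      intro k; unfold Yx; rw [sum_filter]
    calc ∑ k ∈ range n, (Yx x k) ^ 2
        = ∑ k ∈ range n, ∑ i, ∑ j,
            (if k ≤ i.1 then x i else 0) * (if k ≤ j.1 then x j else 0) := by
          refine Finset.sum_congr rfl fun k _ => ?_
          rw [hY, sq, Finset.sum_mul_sum]
      _ = ∑ i, ∑ j, ∑ k ∈ range n,
            (if k ≤ i.1 then x i else 0) * (if k ≤ j.1 then x j else 0) := by
          rw [Finset.sum_comm]
          refine Finset.sum_congr rfl fun i _ => ?_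
          rw [Finset.sum_comm]
      _ = ∑ i, ∑ j, ((min (i.1 + 1) (j.1 + 1) : ℕ) : ℝ) * (x i * x j) := by
          refine Finset.sum_congr rfl fun i _ => Finset.sum_congr rfl fun j _ => ?_
          have e1 : ∀ k, (if k ≤ i.1 then x i else 0) * (if k ≤ j.1 then x j else 0)
              = if k ≤ i.1 ∧ k ≤ j.1 then x i * x j else 0 := by
            intro k; split_ifs with h1 h2 h3 <;> simp_all <;> ring
          simp_rw [e1]
          rw [Finset.sum_ite, Finset.sum_const, Finset.sum_const_zero, add_zero]
          have hcard : ((range n).filter fun k => k ≤ i.1 ∧ k ≤ j.1)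
              = range (min i.1 j.1 + 1) := by
            ext k
            simp only [mem_filter, mem_range]
            have := i.isLt
            have := j.isLt
            omega
          rw [hcard, Finset.card_range, nsmul_eq_mul]
          congr 1
          have : min (i.1 + 1) (j.1 + 1) = min i.1 j.1 + 1 := by omega
          rw [this]
  have hite : ∑ i, ∑ j, (if i = j then t else 0) * (x i * x j) = t * ∑ i, (x i) ^ 2 := by
    rw [Finset.mul_sum]
    refine Finset.sum_congr rfl fun i _ => ?_
    rw [Finset.sum_eq_single i (fun j _ hij => by simp [Ne.symm hij]) (by simp)]
    simp [sq]
  have hs : ∑ i, ∑ j, s * (x i * x j) = s * (Yx x 0) ^ 2 := by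
    have hY0 : Yx x 0 = ∑ i, x i := by
      unfold Yx
      rw [Finset.sum_filter]
      simp
    rw [hY0, sq, Finset.sum_mul_sum, Finset.mul_sum]
    refine Finset.sum_congr rfl fun i _ => ?_
    rw [Finset.mul_sum]
  calc x ⬝ᵥ (A n s t) *ᵥ x
      = ∑ i, ∑ j, (((min (i.1 + 1) (j.1 + 1) : ℕ) : ℝ) * (x i * x j)
          + s * (x i * x j) + (if i = j then t else 0) * (x i * x j)) := by
        simp only [dotProduct, mulVec, A, Matrix.of_apply, Finset.mul_sum]
        refine Finset.sum_congr rfl fun i _ => Finset.sum_congr rfl fun j _ => by ring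
    _ = ∑ k ∈ range n, (Yx x k) ^ 2 + s * (Yx x 0) ^ 2 + t * ∑ i, (x i) ^ 2 := by
        simp only [Finset.sum_add_distrib]
        rw [← hmin, hite, hs]

lemma Yx_eval {n : ℕ} (Z : ℕ → ℝ) {k : ℕ} (hk : k ≤ n) :
    Yx (fun i : Fin n => Z i.1 - Z (i.1 + 1)) k = Z k - Z n := by
  unfold Yx
  rw [sum_filter,
    Fin.sum_univ_eq_sum_range (fun j => if k ≤ j then Z j - Z (j + 1) else 0) n,
    ← Finset.sum_filter]
  have hIco : ((range n).filter fun j => k ≤ j) = Ico k n := by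
    ext j
    simp only [mem_filter, mem_range, mem_Ico]
    omega
  rw [hIco, sum_Ico_eq_sum_range]
  have : ∀ i, Z (k + i) - Z (k + i + 1) = Z (k + i) - Z (k + (i + 1)) := by
    intro i; ring_nf
  calc ∑ i ∈ range (n - k), (Z (k + i) - Z (k + i + 1))
      = ∑ i ∈ range (n - k), ((fun i => Z (k + i)) i - (fun i => Z (k + i)) (i + 1)) := rfl
    _ = Z (k + 0) - Z (k + (n - k)) := Finset.sum_range_sub' (fun i => Z (k + i)) (n - k)
    _ = Z k - Z n := by
        congr 2
        omega

end Aux2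

open Finset Matrix

/-- `Aₙ(-1/2,t)` is positive semidefinite iff `t ≥ -1/(2 + 2 cos(π/(2n)))`. -/
theorem A_neg_half_posSemidef_iff (n : ℕ) (hn : 1 ≤ n) (t : ℝ) :
    (A n (-1 / 2) t).PosSemidef ↔ t ≥ -1 / (2 + 2 * Real.cos (π / (2 * n))) := by
  have hθ : π / (2 * (n:ℝ)) = thet n := rfl
  set c : ℝ := 2 + 2 * Real.cos (thet n) with hc_def
  have hcosθ : 0 ≤ Real.cos (thet n) := by
    apply Real.cos_nonneg_of_mem_Icc
    constructor
    · linarith [thet_pos hn, Real.pi_pos]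
    · have h2 : (2:ℝ) ≤ 2 * n := by
        have : (1:ℝ) ≤ n := by exact_mod_cast hn
        linarith
      have : π / (2 * (n:ℝ)) ≤ π / 2 :=
        div_le_div_of_nonneg_left Real.pi_pos.le (by norm_num) h2
      exact this
  have hc : 0 < c := by positivity
  -- nonnegativity of the SOS remainder for any Y
  have hsos : ∀ Y : ℕ → ℝ, 0 ≤ ∑ j ∈ range (n - 1),
      (Real.cos (((j:ℝ) + 1) * thet n) * Y j + Real.cos ((j:ℝ) * thet n) * Y (j + 1)) ^ 2
        / (Real.cos ((j:ℝ) * thet n) * Real.cos (((j:ℝ) + 1) * thet n)) := by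
    intro Y
    apply Finset.sum_nonneg
    intro j hj
    have hj' : j < n - 1 := Finset.mem_range.mp hj
    have h1 : 0 < Real.cos ((j:ℝ) * thet n) := cos_thet_pos hn (by omega)
    have h2 : 0 < Real.cos (((j:ℝ) + 1) * thet n) := by
      have := cos_thet_pos hn (k := j + 1) (by omega)
      push_cast at this
      exact this
    positivity
  rw [hθ, ← hc_def]
  constructor
  · -- PSD → t ≥ -1/c
    intro hpsd
    set Z : ℕ → ℝ := fun k =>
      if k < n then (-1 : ℝ) ^ k * Real.cos ((k:ℝ) * thet n) else 0 with hZ_def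
    have hZn : Z n = 0 := by simp [hZ_def]
    set x : Fin n → ℝ := fun i => Z i.1 - Z (i.1 + 1) with hx_def
    have hYxk : ∀ k ≤ n, Yx x k = Z k := by
      intro k hk
      rw [hx_def, Yx_eval Z hk, hZn, sub_zero]
    have hF := F_eq hn Z hZn
    -- the SOS vanishes for Z
    have hzero : ∑ j ∈ range (n - 1),
        (Real.cos (((j:ℝ) + 1) * thet n) * Z j + Real.cos ((j:ℝ) * thet n) * Z (j + 1)) ^ 2
          / (Real.cos ((j:ℝ) * thet n) * Real.cos (((j:ℝ) + 1) * thet n)) = 0 := by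
      apply Finset.sum_eq_zero
      intro j hj
      have hj' : j < n - 1 := Finset.mem_range.mp hj
      have hZj : Z j = (-1 : ℝ) ^ j * Real.cos ((j:ℝ) * thet n) := by
        rw [hZ_def]; simp only []; rw [if_pos (by omega)]
      have hZj1 : Z (j + 1) = (-1 : ℝ) ^ (j + 1) * Real.cos (((j:ℝ) + 1) * thet n) := by
        rw [hZ_def]; simp only []; rw [if_pos (by omega)]; push_cast; ring_nf
      have hnum : Real.cos (((j:ℝ) + 1) * thet n) * Z j
          + Real.cos ((j:ℝ) * thet n) * Z (j + 1) = 0 := by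
        rw [hZj, hZj1, pow_succ]
        ring
      rw [hnum]
      simp
    rw [hzero] at hF
    -- quadratic form at x
    have hform := quad_form n (-1 / 2) t x
    have hsum1 : ∑ k ∈ range n, (Yx x k) ^ 2 = ∑ k ∈ range n, Z k ^ 2 := by
      refine Finset.sum_congr rfl fun k hk => ?_
      have hk' := Finset.mem_range.mp hk
      rw [hYxk k (by omega)]
    have hsum2 : ∑ i, (x i) ^ 2 = ∑ k ∈ range n, (Z k - Z (k + 1)) ^ 2 := by
      rw [← Fin.sum_univ_eq_sum_range (fun k => (Z k - Z (k + 1)) ^ 2) n]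
    have hY0 : Yx x 0 = Z 0 := hYxk 0 (by omega)
    have hZ0 : Z 0 = 1 := by
      rw [hZ_def]; simp only []; rw [if_pos (by omega)]; simp
    -- S ≥ 1
    have hterm0 : (1:ℝ) ≤ (Z 0 - Z 1) ^ 2 := by
      have hZ1 : Z 1 ≤ 0 := by
        rw [hZ_def]
        simp only []
        split_ifs with h
        · have h1 : 0 ≤ Real.cos ((1:ℝ) * thet n) := by
            have := (cos_thet_pos hn (k := 1) h).le
            push_cast at this
            exact this
          push_cast
          simp only [pow_one]
          nlinarith [h1]
        · exact le_rfl
      nlinarith [hZ0]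
    have hS : (1:ℝ) ≤ ∑ k ∈ range n, (Z k - Z (k + 1)) ^ 2 := by
      calc (1:ℝ) ≤ (Z 0 - Z 1) ^ 2 := hterm0
        _ ≤ ∑ k ∈ range n, (Z k - Z (k + 1)) ^ 2 := by
            apply Finset.single_le_sum (f := fun k => (Z k - Z (k + 1)) ^ 2)
            · intro k _; positivity
            · exact Finset.mem_range.mpr (by omega)
    have hpos := hpsd.dotProduct_mulVec_nonneg x
    rw [show star x = x from funext fun i => rfl] at hpos
    rw [hform, hsum1, hsum2, hY0] at hpos
    -- conclude
    rw [hZ0] at hpos hF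
    rw [ge_iff_le, div_le_iff₀ hc]
    set S := ∑ k ∈ range n, (Z k - Z (k + 1)) ^ 2
    set Q := ∑ k ∈ range n, Z k ^ 2
    have h1 : 0 ≤ S + c * t * S := by
      nlinarith [mul_nonneg hc.le hpos, hF]
    nlinarith [h1, hS]
  · -- t ≥ -1/c → PSD
    intro ht
    refine Matrix.PosSemidef.of_dotProduct_mulVec_nonneg (A_isHermitian n (-1 / 2) t) fun x => ?_
    rw [show star x = x from funext fun i => rfl]
    have hform := quad_form n (-1 / 2) t x
    rw [hform]
    have hYn : Yx x n = 0 := Yx_ge x le_rfl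
    have hF := F_eq hn (Yx x) hYn
    have hsosx := hsos (Yx x)
    rw [← hF] at hsosx
    have hx2 := sum_sq_eq x
    have hx2nn : 0 ≤ ∑ i, (x i) ^ 2 := Finset.sum_nonneg fun i _ => sq_nonneg _
    rw [hx2] at hx2nn ⊢
    rw [ge_iff_le, div_le_iff₀ hc] at ht
    set S := ∑ k ∈ range n, (Yx x k - Yx x (k + 1)) ^ 2
    set Q := ∑ k ∈ range n, (Yx x k) ^ 2
    rw [← hc_def] at hsosx
    clear_value S Q c
    have hH1 : 0 ≤ (c * t + 1) * S :=
      mul_nonneg (by linarith : (0:ℝ) ≤ c * t + 1) hx2nn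
    have hexp : c * (Q + -1 / 2 * Yx x 0 ^ 2 + t * S)
        = (c * (Q - Yx x 0 ^ 2 / 2) - S) + (c * t + 1) * S := by ring
    have key : 0 ≤ c * (Q + -1 / 2 * Yx x 0 ^ 2 + t * S) := by
      rw [hexp]; linarith
    exact le_of_mul_le_mul_left (by linarith) hc
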